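/- Let m ≥ 1 and let p : E → Sᵐ be a Hurewicz fibration, and fix e₀ ∈ E with p(e₀) = x₀ where x₀ ∈ Sᵐ is a basepoint. Then the following are equivalent: (i) p admits a continuous pointed cross-section s : Sᵐ → E with p ∘ s = id and s(x₀) = e₀; (ii) p_# : π_m(E, e₀) → π_m(Sᵐ, x₀) is surjective, i.e. for every pointed continuous map f : (Sᵐ, x₀) → (Sᵐ, x₀) there is a pointed continuous map g : (Sᵐ, x₀) → (E, e₀) with p ∘ g homotopic to f relative to the basepoint. -/

import Mathlib

open Topology unitInterval

/-- Two maps `f g : A → B` are (freely) homotopic. -/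
def MapsHomotopic {A B : Type*} [TopologicalSpace A] [TopologicalSpace B]
    (f g : A → B) : Prop :=
  ∃ H : A × unitInterval → B, Continuous H ∧ (∀ a, H (a, 0) = f a) ∧ (∀ a, H (a, 1) = g a)

/-- A continuous local section of `q` over the subset `U`. -/
def HasLocalSection {E B : Type*} [TopologicalSpace E] [TopologicalSpace B]
    (q : E → B) (U : Set B) : Prop :=
  ∃ s : U → E, Continuous s ∧ ∀ u : U, q (s u) = (u : B)

/-- The sectional number `sec_op(q)`: the least `n` such that `B` is covered by `n`
open sets each admitting a continuous local section of `q`. -/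
noncomputable def secOp {E B : Type*} [TopologicalSpace E] [TopologicalSpace B]
    (q : E → B) : ℕ∞ :=
  sInf ((fun n : ℕ => (n : ℕ∞)) '' {n : ℕ | ∃ U : Fin n → Set B,
    (∀ i, IsOpen (U i)) ∧ (⋃ i, U i) = Set.univ ∧ ∀ i, HasLocalSection q (U i)})

/-- A homotopy local section of `q` over `U`: a continuous `s : U → E` with `q ∘ s`
homotopic to the inclusion. -/
def HasHtpyLocalSection {E B : Type*} [TopologicalSpace E] [TopologicalSpace B]
    (q : E → B) (U : Set B) : Prop :=
  ∃ s : U → E, Continuous s ∧ MapsHomotopic (fun u => q (s u)) (fun u : U => (u : B))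

/-- The Schwarz genus of `q`. -/
noncomputable def schwarzGenus {E B : Type*} [TopologicalSpace E] [TopologicalSpace B]
    (q : E → B) : ℕ∞ :=
  sInf ((fun n : ℕ => (n : ℕ∞)) '' {n : ℕ | ∃ U : Fin n → Set B,
    (∀ i, IsOpen (U i)) ∧ (⋃ i, U i) = Set.univ ∧ ∀ i, HasHtpyLocalSection q (U i)})

/-- Hurewicz fibration: homotopy lifting property with respect to all topological spaces. -/
def IsHurewiczFibration {E B : Type*} [TopologicalSpace E] [TopologicalSpace B]
    (p : E → B) : Prop :=
  ∀ (X : Type*) [TopologicalSpace X] (h : X → E) (H : X × unitInterval → B),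
    Continuous h → Continuous H → (∀ x, H (x, 0) = p (h x)) →
      ∃ H' : X × unitInterval → E, Continuous H' ∧ (∀ y, p (H' y) = H y) ∧
        ∀ x, H' (x, 0) = h x

/-- The topological complexity of a map `q : Y → Z`: the least `n` such that `Y × Z`
is covered by `n` open sets each admitting a continuous local section of
`e_q : PY → Y × Z`, `γ ↦ (γ(0), q(γ(1)))`. -/
noncomputable def topComplexity {Y Z : Type*} [TopologicalSpace Y] [TopologicalSpace Z]
    (q : Y → Z) : ℕ∞ :=
  sInf ((fun n : ℕ => (n : ℕ∞)) '' {n : ℕ | ∃ U : Fin n → Set (Y × Z),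
    (∀ i, IsOpen (U i)) ∧ (⋃ i, U i) = Set.univ ∧
    ∀ i, ∃ s : U i → C(unitInterval, Y), Continuous s ∧
      ∀ u : U i, ((s u) 0, q ((s u) 1)) = (u : Y × Z)})


lemma section_of_based_lift {E B : Type*} [TopologicalSpace E] [MetricSpace B]
    [CompactSpace B]
    (p : E → B)
    (hfib : ∀ (h : B → E) (H : B × unitInterval → B),
      Continuous h → Continuous H → (∀ x, H (x, 0) = p (h x)) →
      ∃ H' : B × unitInterval → E, Continuous H' ∧ (∀ y, p (H' y) = H y) ∧
        ∀ x, H' (x, 0) = h x)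
    (x₀ : B) (e₀ : E)
    (g : B → E) (hg : Continuous g) (hg0 : g x₀ = e₀)
    (H : B × unitInterval → B) (hHc : Continuous H)
    (hH0 : ∀ x, H (x, 0) = p (g x)) (hH1 : ∀ x, H (x, 1) = x)
    (hHb : ∀ t, H (x₀, t) = x₀) :
    ∃ s : B → E, Continuous s ∧ (∀ x, p (s x) = x) ∧ s x₀ = e₀ := by
  classical
  set φ : B → ℝ := fun x => min 1 (dist x x₀) with hφ
  have φcont : Continuous φ := continuous_const.min (continuous_id.dist continuous_const)
  have φ0 : φ x₀ = 0 := by simp [hφ]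
  have φpos : ∀ x : B, x ≠ x₀ → 0 < φ x := by
    intro x hx
    exact lt_min one_pos (dist_pos.mpr hx)
  have φle : ∀ x : B, φ x ≤ 1 := fun x => min_le_left _ _
  have φnonneg : ∀ x : B, 0 ≤ φ x := fun x => le_min zero_le_one dist_nonneg
  -- the time compression map
  set T : B → unitInterval → unitInterval :=
    fun y t => Set.projIcc 0 1 zero_le_one (min 1 ((t : ℝ) / φ y)) with hT
  set Hhat : B × unitInterval → B := fun z => H (z.1, T z.1 z.2) with hHhat
  have hbase : ∀ t : unitInterval, Hhat (x₀, t) = x₀ := fun t => hHb _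
  -- continuity of Hhat
  have hHhatc : Continuous Hhat := by
    rw [continuous_iff_continuousAt]
    rintro ⟨y, t⟩
    by_cases hy : y = x₀
    · subst hy
      -- use uniform continuity of H
      have hUC : UniformContinuous H := CompactSpace.uniformContinuous_of_continuous hHc
      rw [Metric.continuousAt_iff]
      intro ε hε
      obtain ⟨δ, hδ, hδ'⟩ := Metric.uniformContinuous_iff.mp hUC ε hε
      refine ⟨δ, hδ, ?_⟩
      rintro ⟨z, u⟩ hzu
      have h1 : dist z y < δ := by
        calc dist z y ≤ dist ((z, u) : B × unitInterval) (y, t) := by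
              rw [Prod.dist_eq]; exact le_max_left _ _
          _ < δ := hzu
      have h2 : dist ((z, T z u) : B × unitInterval) (y, T z u) < δ := by
        rw [Prod.dist_eq]
        simp only [dist_self]
        exact max_lt h1 hδ
      have := hδ' h2
      simpa [hHhat, hbase, hHb] using this
    · have hφy : φ y ≠ 0 := ne_of_gt (φpos y hy)
      have ha : ContinuousAt (fun z : B × unitInterval => ((z.2 : ℝ))) (y, t) :=
        (continuous_subtype_val.comp continuous_snd).continuousAt
      have hb : ContinuousAt (fun z : B × unitInterval => φ z.1) (y, t) :=
        (φcont.comp continuous_fst).continuousAt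
      have hdiv : ContinuousAt (fun z : B × unitInterval => ((z.2 : ℝ)) / φ z.1) (y, t) :=
        ha.div hb hφy
      have hmin : ContinuousAt (fun z : B × unitInterval => min 1 ((z.2 : ℝ) / φ z.1)) (y, t) :=
        ContinuousAt.inf continuousAt_const hdiv
      have hpair : ContinuousAt (fun z : B × unitInterval => (z.1, T z.1 z.2)) (y, t) :=
        continuousAt_fst.prodMk ((continuous_projIcc.continuousAt).comp hmin)
      exact hHc.continuousAt.comp hpair
  -- initial condition
  have hinit : ∀ x : B, Hhat (x, 0) = p (g x) := by
    intro x
    have : T x 0 = 0 := by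
      apply Subtype.ext
      simp [hT, Set.coe_projIcc]
    rw [hHhat]
    simp only [this]
    exact hH0 x
  obtain ⟨Q, hQc, hQp, hQ0⟩ := hfib g Hhat hg hHhatc hinit
  set τ : B → unitInterval := fun x => Set.projIcc 0 1 zero_le_one (φ x) with hτ
  have hτc : Continuous τ := continuous_projIcc.comp φcont
  have hτ0 : τ x₀ = 0 := by
    apply Subtype.ext
    simp [hτ, φ0, Set.coe_projIcc]
  refine ⟨fun x => Q (x, τ x), hQc.comp (continuous_id.prodMk hτc), ?_, ?_⟩
  · intro x
    rw [hQp]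
    by_cases hx : x = x₀
    · subst hx; exact hbase _
    · have hφx : φ x ≠ 0 := ne_of_gt (φpos x hx)
      have hτx : ((τ x : ℝ)) = φ x := by
        simp [hτ, Set.coe_projIcc, max_eq_right (φnonneg x), min_eq_right (φle x)]
      have hT1 : T x (τ x) = 1 := by
        apply Subtype.ext
        simp [hT, Set.coe_projIcc, hτx, div_self hφx]
      rw [hHhat]
      simp only [hT1]
      exact hH1 x
  · show Q (x₀, τ x₀) = e₀
    rw [hτ0, hQ0, hg0]


lemma hlp_of_isHurewiczFibration {E : Type*} {B : Type} [TopologicalSpace E] [TopologicalSpace B]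
    (p : E → B) (hfib : IsHurewiczFibration p)
    (h : B → E) (K : B × unitInterval → B)
    (hh : Continuous h) (hK : Continuous K) (hK0 : ∀ x, K (x, 0) = p (h x)) :
    ∃ H' : B × unitInterval → E, Continuous H' ∧ (∀ y, p (H' y) = K y) ∧
      ∀ x, H' (x, 0) = h x := by
  let u : ULift.{_, _} B ≃ₜ B := Homeomorph.ulift
  obtain ⟨Q, hQc, hQp, hQ0⟩ := hfib (ULift B) (fun x => h (u x))
    (fun z => K (u z.1, z.2)) (hh.comp u.continuous)
    (hK.comp ((u.continuous.comp continuous_fst).prodMk continuous_snd))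
    (fun x => hK0 (u x))
  refine ⟨fun z => Q (u.symm z.1, z.2),
    hQc.comp ((u.symm.continuous.comp continuous_fst).prodMk continuous_snd), ?_, ?_⟩
  · rintro ⟨x, t⟩
    simpa using hQp (u.symm x, t)
  · intro x
    simpa using hQ0 (u.symm x)

/-- for a Hurewicz fibration `p : E → Sᵐ` (`m ≥ 1`) with `p e₀ = x₀`,
`p` admits a pointed continuous cross-section iff `p_# : π_m(E,e₀) → π_m(Sᵐ,x₀)` is
surjective (every pointed map `f : Sᵐ → Sᵐ` lifts up to based homotopy). -/
theorem stmt4 {E : Type*} [TopologicalSpace E] (m : ℕ) (hm : 1 ≤ m)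
    (p : E → Metric.sphere (0 : EuclideanSpace ℝ (Fin (m + 1))) 1)
    (hp : Continuous p) (hfib : IsHurewiczFibration p)
    (x₀ : Metric.sphere (0 : EuclideanSpace ℝ (Fin (m + 1))) 1)
    (e₀ : E) (he₀ : p e₀ = x₀) :
    (∃ s : Metric.sphere (0 : EuclideanSpace ℝ (Fin (m + 1))) 1 → E,
        Continuous s ∧ (∀ x, p (s x) = x) ∧ s x₀ = e₀) ↔
      (∀ f : Metric.sphere (0 : EuclideanSpace ℝ (Fin (m + 1))) 1 →
            Metric.sphere (0 : EuclideanSpace ℝ (Fin (m + 1))) 1,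
        Continuous f → f x₀ = x₀ →
          ∃ g : Metric.sphere (0 : EuclideanSpace ℝ (Fin (m + 1))) 1 → E,
            Continuous g ∧ g x₀ = e₀ ∧
              ∃ H : Metric.sphere (0 : EuclideanSpace ℝ (Fin (m + 1))) 1 × unitInterval →
                  Metric.sphere (0 : EuclideanSpace ℝ (Fin (m + 1))) 1,
                Continuous H ∧ (∀ x, H (x, 0) = p (g x)) ∧ (∀ x, H (x, 1) = f x) ∧
                  ∀ t, H (x₀, t) = x₀) := by
  constructor
  · rintro ⟨s, hs, hps, hsx⟩ f hf hfx
    refine ⟨s ∘ f, hs.comp hf, by simp [Function.comp, hfx, hsx], fun q => f q.1,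
      hf.comp continuous_fst, fun x => (hps (f x)).symm, fun x => rfl, fun t => hfx⟩
  · intro hsur
    obtain ⟨g, hg, hg0, H, hHc, hH0, hH1, hHb⟩ := hsur id continuous_id rfl
    have hcs : CompactSpace (Metric.sphere (0 : EuclideanSpace ℝ (Fin (m + 1))) 1) :=
      isCompact_iff_compactSpace.mp (isCompact_sphere _ _)
    exact section_of_based_lift p (hlp_of_isHurewiczFibration p hfib)
      x₀ e₀ g hg hg0 H hHc hH0 hH1 hHb
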